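/- Let V be a K-vector space with a K-linear representation φ of G, let Q ≤ Ĝ be a subgroup and H := Q^⊥, and let e ∈ V be an element whose orbit {φ_g(e) | g ∈ H} is a linearly independent subset of V. Let T := {g ∈ G | φ_g(e) = e} be the stabilizer of e and m := [H : T ∩ H]. For γ ∈ Ĝ define w_γ := |T ∩ H|⁻¹ · Σ_{g ∈ H} γ(g)⁻¹ · φ_g(e). If γ₁, …, γ_m ∈ T^⊥ is a system of representatives for the cosets of Q ∩ T^⊥ in T^⊥, then (w_{γ₁}, …, w_{γ_m}) is a basis of the K-span of {φ_g(e) | g ∈ H}, and moreover φ_g(e) = m⁻¹ · Σ_{j=1}^m γ_j(g) · w_{γ_j} for every g ∈ H. -/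

import Mathlib

/-- For a subgroup `Q` of the character group `Ĝ = G →* Kˣ`, its perp
`Q^⊥ = {g ∈ G | γ(g) = 1 for all γ ∈ Q}`, a subgroup of `G`. -/
def charPerp {K : Type*} [Field K] {G : Type*} [CommGroup G] (Q : Subgroup (G →* Kˣ)) :
    Subgroup G where
  carrier := {g | ∀ γ ∈ Q, γ g = 1}
  one_mem' := fun γ _ => map_one γ
  mul_mem' := fun {a b} ha hb γ hγ => by rw [map_mul, ha γ hγ, hb γ hγ, one_mul]
  inv_mem' := fun {a} ha γ hγ => by rw [map_inv, ha γ hγ, inv_one]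

/-- For a subgroup `T` of `G`, its perp `T^⊥ = {γ ∈ Ĝ | γ(t) = 1 for all t ∈ T}`,
a subgroup of the character group `Ĝ = G →* Kˣ`. -/
def groupPerp (K : Type*) [Field K] {G : Type*} [CommGroup G] (T : Subgroup G) :
    Subgroup (G →* Kˣ) where
  carrier := {γ | ∀ t ∈ T, γ t = 1}
  one_mem' := fun t _ => rfl
  mul_mem' := fun {a b} ha hb t ht => by
    rw [MonoidHom.mul_apply, ha t ht, hb t ht, one_mul]
  inv_mem' := fun {a} ha t ht => by
    rw [MonoidHom.inv_apply, ha t ht, inv_one]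

/-- Discrete Fourier transform of an orbit: if the orbit `{φ_g(e) | g ∈ H}` (with
`H = Q^⊥`) is linearly independent, `T` is the stabilizer of `e`, `m = [H : T ∩ H]`, and
`γ₁, …, γ_m ∈ T^⊥` represent the cosets of `Q ∩ T^⊥` in `T^⊥`, then the elements
`w_γ := |T ∩ H|⁻¹ ∑_{g ∈ H} γ(g)⁻¹ φ_g(e)` for `γ = γ₁, …, γ_m` form a basis of the span
of the orbit, and `φ_g(e) = m⁻¹ ∑_j γ_j(g) w_{γ_j}` for all `g ∈ H`. -/
theorem fourier_basis_of_orbit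
    (K : Type*) [Field K] [IsAlgClosed K] [CharZero K]
    (G : Type*) [CommGroup G] [Fintype G]
    (V : Type*) [AddCommGroup V] [Module K V]
    (φ : G →* (V ≃ₗ[K] V)) (Q : Subgroup (G →* Kˣ))
    (H : Subgroup G) (hH : H = charPerp Q)
    (e : V)
    (hind : LinearIndependent K
      (fun x : ((fun g : G => φ g e) '' (H : Set G)) => (x : V)))
    (T : Subgroup G) (hT : ∀ g : G, g ∈ T ↔ φ g e = e)
    (m : ℕ) (hm : m = T.relIndex H)
    (w : (G →* Kˣ) → V)
    (hw : ∀ γ : G →* Kˣ,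
      w γ = ((Nat.card ↥(T ⊓ H) : K))⁻¹ • ∑ᶠ g ∈ (H : Set G), ((γ g : K))⁻¹ • φ g e)
    (γs : Fin m → (G →* Kˣ)) (hγs : ∀ j, γs j ∈ groupPerp K T)
    (hrep : ∀ χ ∈ groupPerp K T, ∃! j : Fin m, (γs j)⁻¹ * χ ∈ Q ⊓ groupPerp K T) :
    LinearIndependent K (fun j : Fin m => w (γs j)) ∧
    Submodule.span K (Set.range fun j : Fin m => w (γs j)) =
      Submodule.span K ((fun g : G => φ g e) '' (H : Set G)) ∧
    ∀ g ∈ H, φ g e = (m : K)⁻¹ • ∑ j : Fin m, ((γs j) g : K) • w (γs j) := by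
  classical
  haveI : Fintype H := Fintype.ofFinite _
  set N : Subgroup H := T.subgroupOf H with hN
  haveI : Fintype (H ⧸ N) := Fintype.ofFinite _
  set q : H → H ⧸ N := QuotientGroup.mk with hqdef
  have hmC : m = Fintype.card (H ⧸ N) := by
    rw [hm, Subgroup.relIndex, Subgroup.index, Nat.card_eq_fintype_card]
  have happ : ∀ x y : G, φ (x * y) e = φ x (φ y e) := fun x y => by rw [map_mul]; rfl
  have key : ∀ a b : H, q a = q b ↔ φ (a : G) e = φ (b : G) e := by
    intro a b
    rw [hqdef, QuotientGroup.eq, hN, Subgroup.mem_subgroupOf, hT]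
    have hc : ((a⁻¹ * b : H) : G) = (a : G)⁻¹ * (b : G) := rfl
    rw [hc]
    constructor
    · intro h
      have h2 := congrArg (fun v => φ (a : G) v) h
      rw [← happ, mul_inv_cancel_left] at h2
      exact h2.symm
    · intro h
      rw [happ, ← h, ← happ, inv_mul_cancel, map_one]
      rfl
  have hsurj : ∀ c : H ⧸ N, ∃ h : H, q h = c := fun c => Quotient.exists_rep c
  let φb : H ⧸ N → V := Quotient.lift (fun h : H => φ (h : G) e)
    (fun a b hab => (key a b).mp (Quotient.sound hab))
  have hφb : ∀ h : H, φb (q h) = φ (h : G) e := fun h => rfl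
  have hφbinj : Function.Injective φb := by
    intro c1 c2 hc
    obtain ⟨a, rfl⟩ := hsurj c1
    obtain ⟨b, rfl⟩ := hsurj c2
    rw [hφb, hφb] at hc
    exact (key a b).mpr hc
  have hrange : Set.range φb = (fun g : G => φ g e) '' (H : Set G) := by
    ext v
    constructor
    · rintro ⟨c, rfl⟩
      obtain ⟨h, rfl⟩ := hsurj c
      exact ⟨h, h.2, rfl⟩
    · rintro ⟨g, hg, rfl⟩
      exact ⟨q ⟨g, hg⟩, rfl⟩
  have hφbind : LinearIndependent K φb := by
    have hu : Function.Injective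
        (fun c : H ⧸ N => (⟨φb c, by rw [← hrange]; exact ⟨c, rfl⟩⟩ :
          ((fun g : G => φ g e) '' (H : Set G)))) :=
      fun a b hab => hφbinj (congrArg Subtype.val hab)
    exact hind.comp _ hu
  -- cardinality of T ⊓ H vs N
  have hncard : Nat.card (↥(T ⊓ H)) = Nat.card N := by
    rw [hN, ← Subgroup.inf_subgroupOf_right T H]
    exact (Nat.card_congr (Subgroup.subgroupOfEquivOfLe
      (inf_le_right : T ⊓ H ≤ H)).toEquiv).symm
  have hnpos : 0 < Nat.card N := Nat.card_pos
  -- the characters on the quotient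
  have hγlift : ∀ j : Fin m, ∀ h : ↥H, h ∈ N → ((γs j).comp H.subtype) h = 1 := by
    intro j h hh
    exact hγs j (h : G) (by rwa [hN, Subgroup.mem_subgroupOf] at hh)
  let γb : Fin m → (H ⧸ N →* Kˣ) := fun j =>
    QuotientGroup.lift N ((γs j).comp H.subtype) (hγlift j)
  have hγb : ∀ (j : Fin m) (h : ↥H), γb j (q h) = γs j (h : G) := fun j h => rfl
  -- fibers of q
  have hfiber : ∀ c : H ⧸ N, Fintype.card {h : ↥H // q h = c} = Nat.card N := by
    intro c
    obtain ⟨a, ha⟩ := hsurj c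
    rw [← Nat.card_eq_fintype_card]
    refine Nat.card_congr ?_
    refine ⟨fun x => ⟨a⁻¹ * x.1, ?_⟩, fun n => ⟨a * n.1, ?_⟩, ?_, ?_⟩
    · exact QuotientGroup.eq.mp (ha.trans x.2.symm)
    · refine Eq.trans ?_ ha
      exact (QuotientGroup.eq.mpr (by simpa using n.2)).symm
    · intro x; ext; simp
    · intro n; ext; simp
  -- conversion of the finsum
  have hsumH : ∀ f : G → V, (∑ᶠ g ∈ (H : Set G), f g) = ∑ h : ↥H, f (h : G) := by
    intro f
    rw [← Set.coe_toFinset (H : Set G), finsum_mem_coe_finset]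
    exact Finset.sum_subtype _ (by simp) f
  -- rewrite w over the quotient
  have hwc : ∀ j, w (γs j) = ∑ c : H ⧸ N, (((γb j c)⁻¹ : Kˣ) : K) • φb c := by
    intro j
    rw [hw, hsumH]
    have h1 : ∀ h : ↥H, ((γs j (h : G) : K))⁻¹ • φ (h : G) e
        = (((γb j (q h))⁻¹ : Kˣ) : K) • φb (q h) := by
      intro h
      rw [hγb, hφb, ← Units.val_inv_eq_inv_val]
    rw [Finset.sum_congr rfl (fun h _ => h1 h)]
    rw [← Fintype.sum_fiberwise q
      (fun h : ↥H => (((γb j (q h))⁻¹ : Kˣ) : K) • φb (q h))]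
    have h2 : ∀ c : H ⧸ N,
        (∑ x : {h : ↥H // q h = c}, (((γb j (q x.1))⁻¹ : Kˣ) : K) • φb (q x.1))
          = (Nat.card N) • ((((γb j c)⁻¹ : Kˣ) : K) • φb c) := by
      intro c
      rw [Finset.sum_congr rfl (fun x _ => by rw [x.2])]
      rw [Finset.sum_const, Finset.card_univ, hfiber c]
    rw [Finset.sum_congr rfl (fun c _ => h2 c), hncard, Finset.smul_sum]
    refine Finset.sum_congr rfl (fun c _ => ?_)
    rw [← Nat.cast_smul_eq_nsmul K, smul_smul, inv_mul_cancel₀, one_smul]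
    exact_mod_cast hnpos.ne'
  -- orthogonality of characters
  have horth : ∀ x : ↥H, (x : G) ∉ T → (∑ j : Fin m, ((γs j (x : G) : Kˣ) : K)) = 0 := by
    intro x hx
    have hx1 : (QuotientGroup.mk (x : G) : G ⧸ T) ≠ 1 := by
      rwa [Ne, QuotientGroup.eq_one_iff]
    obtain ⟨ψ, hψ⟩ := CommGroup.exists_apply_ne_one_of_hasEnoughRootsOfUnity (G ⧸ T) K hx1
    set χ : G →* Kˣ := ψ.comp (QuotientGroup.mk' T) with hχdef
    have hχT : χ ∈ groupPerp K T := by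
      intro t ht
      have : (QuotientGroup.mk t : G ⧸ T) = 1 := (QuotientGroup.eq_one_iff t).mpr ht
      simp only [hχdef, MonoidHom.comp_apply, QuotientGroup.mk'_apply, this, map_one]
    have hχx : χ (x : G) ≠ 1 := hψ
    choose σ hσ hσu using fun j => hrep (χ * γs j) (mul_mem hχT (hγs j))
    choose τ hτ hτu using fun j => hrep (χ⁻¹ * γs j) (mul_mem (inv_mem hχT) (hγs j))
    have hτσ : ∀ j, τ (σ j) = j := by
      intro j
      refine (hτu (σ j) j ?_).symm
      show (γs j)⁻¹ * (χ⁻¹ * γs (σ j)) ∈ Q ⊓ groupPerp K T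
      rw [show (γs j)⁻¹ * (χ⁻¹ * γs (σ j)) = ((γs (σ j))⁻¹ * (χ * γs j))⁻¹ by
        ext g
        simp [MonoidHom.mul_apply, MonoidHom.inv_apply, mul_inv_rev, mul_comm,
          mul_left_comm, mul_assoc]]
      exact inv_mem (hσ j)
    have hστ : ∀ j, σ (τ j) = j := by
      intro j
      refine (hσu (τ j) j ?_).symm
      show (γs j)⁻¹ * (χ * γs (τ j)) ∈ Q ⊓ groupPerp K T
      rw [show (γs j)⁻¹ * (χ * γs (τ j)) = ((γs (τ j))⁻¹ * (χ⁻¹ * γs j))⁻¹ by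
        ext g
        simp [MonoidHom.mul_apply, MonoidHom.inv_apply, mul_inv_rev, mul_comm,
          mul_left_comm, mul_assoc]]
      exact inv_mem (hτ j)
    have hbij : Function.Bijective σ :=
      Function.bijective_iff_has_inverse.mpr ⟨τ, hτσ, hστ⟩
    have hrel : ∀ j, γs (σ j) (x : G) = χ (x : G) * γs j (x : G) := by
      intro j
      have h1 : (γs (σ j))⁻¹ * (χ * γs j) ∈ Q := (Subgroup.mem_inf.mp (hσ j)).1
      have h2 : ((γs (σ j))⁻¹ * (χ * γs j)) (x : G) = 1 := by
        have hxQ : (x : G) ∈ charPerp Q := hH ▸ x.2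
        exact hxQ _ h1
      rw [MonoidHom.mul_apply, MonoidHom.mul_apply, MonoidHom.inv_apply,
        inv_mul_eq_one] at h2
      exact h2
    have hs : (∑ j : Fin m, ((γs (σ j) (x : G) : Kˣ) : K))
        = ∑ j : Fin m, ((γs j (x : G) : Kˣ) : K) :=
      Fintype.sum_bijective σ hbij _ _ (fun j => rfl)
    have heq : ((χ (x : G) : Kˣ) : K) * (∑ j : Fin m, ((γs j (x : G) : Kˣ) : K))
        = ∑ j : Fin m, ((γs j (x : G) : Kˣ) : K) := by
      rw [Finset.mul_sum, ← hs]
      refine Finset.sum_congr rfl (fun j _ => ?_)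
      rw [hrel j, Units.val_mul]
    have hne : ((χ (x : G) : Kˣ) : K) ≠ 1 := by
      intro hcontra
      exact hχx (Units.ext hcontra)
    by_contra hS
    exact hne ((mul_left_eq_self₀.mp heq).resolve_right hS)
  have horth2 : ∀ x : ↥H, (∑ j : Fin m, ((γs j (x : G) : Kˣ) : K))
      = if (x : G) ∈ T then (m : K) else 0 := by
    intro x
    by_cases hx : (x : G) ∈ T
    · simp only [hx, if_true]
      rw [Finset.sum_congr rfl (fun j _ => by rw [hγs j (x : G) hx, Units.val_one])]
      simp
    · simp only [hx, if_false]
      exact horth x hx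
  have hmpos : 0 < m := by rw [hmC]; exact Fintype.card_pos
  have hmK : (m : K) ≠ 0 := Nat.cast_ne_zero.mpr hmpos.ne'
  have hqiff : ∀ x y : ↥H, (q x = q y) ↔ ((x * y⁻¹ : ↥H) : G) ∈ T := by
    intro x y
    rw [hqdef, QuotientGroup.eq, hN, Subgroup.mem_subgroupOf]
    have hcoe : ((x * y⁻¹ : ↥H) : G) = (((x⁻¹ * y : ↥H) : G))⁻¹ := by
      push_cast
      rw [mul_inv_rev, inv_inv, mul_comm]
    rw [hcoe, inv_mem_iff]
  -- the inversion formula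
  have hinv : ∀ x : ↥H, φ (x : G) e
      = (m : K)⁻¹ • ∑ j : Fin m, ((γs j (x : G) : Kˣ) : K) • w (γs j) := by
    intro x
    have step1 : ∀ j : Fin m, ((γs j (x : G) : Kˣ) : K) • w (γs j)
        = ∑ c : ↥H ⧸ N, ((γs j (x : G) * (γb j c)⁻¹ : Kˣ) : K) • φb c := by
      intro j
      rw [hwc j, Finset.smul_sum]
      exact Finset.sum_congr rfl (fun c _ => by rw [smul_smul, ← Units.val_mul])
    rw [Finset.sum_congr rfl (fun j _ => step1 j), Finset.sum_comm]
    have step2 : ∀ c : ↥H ⧸ N,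
        (∑ j : Fin m, ((γs j (x : G) * (γb j c)⁻¹ : Kˣ) : K) • φb c)
          = (if c = q x then (m : K) else 0) • φb c := by
      intro c
      obtain ⟨y, rfl⟩ := hsurj c
      rw [← Finset.sum_smul]
      congr 1
      have hterm : ∀ j, (γs j (x : G) * (γb j (q y))⁻¹ : Kˣ)
          = γs j (((x * y⁻¹ : ↥H) : G)) := by
        intro j
        rw [hγb]
        push_cast
        rw [map_mul, map_inv]
      rw [Finset.sum_congr rfl (fun j _ => by rw [hterm j]), horth2 (x * y⁻¹)]
      by_cases hc : ((x * y⁻¹ : ↥H) : G) ∈ T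
      · rw [if_pos hc, if_pos (((hqiff x y).mpr hc).symm)]
      · rw [if_neg hc, if_neg (fun hcc => hc ((hqiff x y).mp hcc.symm))]
    rw [Finset.sum_congr rfl (fun c _ => step2 c)]
    simp only [ite_smul, zero_smul]
    rw [Finset.sum_ite_eq' Finset.univ (q x) (fun c => (m : K) • φb c),
      if_pos (Finset.mem_univ _), smul_smul, inv_mul_cancel₀ hmK, one_smul, hφb]
  -- span equality
  have hWmem : ∀ j, w (γs j)
      ∈ Submodule.span K ((fun g : G => φ g e) '' (H : Set G)) := by
    intro j
    rw [hwc j]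
    refine Submodule.sum_mem _ (fun c _ => Submodule.smul_mem _ _
      (Submodule.subset_span ?_))
    rw [← hrange]; exact ⟨c, rfl⟩
  have hspan : Submodule.span K (Set.range fun j : Fin m => w (γs j))
      = Submodule.span K ((fun g : G => φ g e) '' (H : Set G)) := by
    apply le_antisymm
    · rw [Submodule.span_le]
      rintro v ⟨j, rfl⟩
      exact hWmem j
    · rw [Submodule.span_le]
      rintro v ⟨g, hg, rfl⟩
      show φ g e ∈ _
      rw [hinv ⟨g, hg⟩]
      exact Submodule.smul_mem _ _ (Submodule.sum_mem _ (fun j _ =>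
        Submodule.smul_mem _ _ (Submodule.subset_span ⟨j, rfl⟩)))
  -- linear independence via dimension count
  haveI : Fintype ((fun g : G => φ g e) '' (H : Set G)) := Fintype.ofFinite _
  have hfr : Module.finrank K
      (Submodule.span K ((fun g : G => φ g e) '' (H : Set G))) = m := by
    rw [finrank_span_set_eq_card hind, Set.toFinset_card, ← Nat.card_eq_fintype_card,
      ← hrange, Nat.card_range_of_injective hφbinj, Nat.card_eq_fintype_card, ← hmC]
  set M := Submodule.span K ((fun g : G => φ g e) '' (H : Set G)) with hM
  let W' : Fin m → M := fun j => ⟨w (γs j), hWmem j⟩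
  have himage : M.subtype '' Set.range W'
      = Set.range (fun j : Fin m => w (γs j)) := by
    ext v
    constructor
    · rintro ⟨-, ⟨j, rfl⟩, rfl⟩; exact ⟨j, rfl⟩
    · rintro ⟨j, rfl⟩; exact ⟨W' j, ⟨j, rfl⟩, rfl⟩
  have hmap : Submodule.map M.subtype (Submodule.span K (Set.range W'))
      = Submodule.map M.subtype ⊤ := by
    rw [Submodule.map_span, himage, hspan, Submodule.map_top, Submodule.range_subtype]
  have hTop : Submodule.span K (Set.range W') = ⊤ :=
    Submodule.map_injective_of_injective M.injective_subtype hmap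
  have hcard : Fintype.card (Fin m) = Module.finrank K M := by
    rw [Fintype.card_fin, hfr]
  have hW'ind : LinearIndependent K W' :=
    linearIndependent_of_top_le_span_of_card_eq_finrank hTop.ge hcard
  have hWind : LinearIndependent K (fun j : Fin m => w (γs j)) :=
    hW'ind.map' M.subtype M.ker_subtype
  exact ⟨hWind, hspan, fun g hg => hinv ⟨g, hg⟩⟩
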